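/- Let α, β ∈ ℂ \ ℝ and suppose α = x·β + y for some rational numbers x, y. Let Γ ⊆ ℂ² be the additive subgroup generated by (1, 0), (0, 1), and (α, β). Then the one-dimensional complex linear subspace L = {(x·t, t) : t ∈ ℂ} ⊆ ℂ² satisfies: L ∩ Γ is free of rank 2. -/

import Mathlib

open Submodule Module

/-- If `α, β ∈ ℂ \ ℝ` with `α = xβ + y` for rationals `x, y`, and `Γ` is
generated by `(1,0), (0,1), (α,β)`, then the complex line `L = {(xt, t) : t ∈ ℂ}`
meets `Γ` in a subgroup free of rank 2. -/
theorem rational_relation_gives_splitting_line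
    (α β : ℂ) (hα : α.im ≠ 0) (hβ : β.im ≠ 0)
    (x y : ℚ) (hxy : α = (x : ℂ) * β + (y : ℂ))
    (Γ : AddSubgroup (ℂ × ℂ))
    (hΓ : Γ = AddSubgroup.closure ({(1, 0), (0, 1), (α, β)} : Set (ℂ × ℂ)))
    (L : Submodule ℂ (ℂ × ℂ))
    (hL : L = Submodule.span ℂ ({((x : ℂ), 1)} : Set (ℂ × ℂ))) :
    Nonempty (Basis (Fin 2) ℤ ((L.toAddSubgroup ⊓ Γ : AddSubgroup (ℂ × ℂ)))) := by
  classical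
  have hxd : (x : ℂ) * (x.den : ℂ) = (x.num : ℂ) := by
    have h : x = (x.num : ℚ) / (x.den : ℚ) := (Rat.num_div_den x).symm
    rw [eq_div_iff (by exact_mod_cast x.den_nz : (x.den:ℚ) ≠ 0)] at h
    exact_mod_cast congrArg (Rat.cast : ℚ → ℂ) h
  have hyd : (y : ℂ) * (y.den : ℂ) = (y.num : ℂ) := by
    have h : y = (y.num : ℚ) / (y.den : ℚ) := (Rat.num_div_den y).symm
    rw [eq_div_iff (by exact_mod_cast y.den_nz : (y.den:ℚ) ≠ 0)] at h
    exact_mod_cast congrArg (Rat.cast : ℚ → ℂ) h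
  -- membership in L
  have hLmem : ∀ z : ℂ × ℂ, z ∈ L ↔ ∃ t : ℂ, z = (t * (x : ℂ), t) := by
    intro z
    rw [hL, mem_span_singleton]
    constructor
    · rintro ⟨t, rfl⟩
      exact ⟨t, by simp [Prod.ext_iff, smul_eq_mul]⟩
    · rintro ⟨t, rfl⟩
      exact ⟨t, by simp [Prod.ext_iff, smul_eq_mul]⟩
  -- membership in Γ
  have hΓmem : ∀ z : ℂ × ℂ, z ∈ Γ ↔
      ∃ a b c : ℤ, z = ((a : ℂ) + (c : ℂ) * α, (b : ℂ) + (c : ℂ) * β) := by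
    intro z
    rw [hΓ, ← span_int_eq_addSubgroupClosure, Submodule.mem_toAddSubgroup,
      mem_span_insert]
    constructor
    · rintro ⟨a, w, hw, rfl⟩
      rw [mem_span_insert] at hw
      obtain ⟨b, v, hv, rfl⟩ := hw
      rw [mem_span_singleton] at hv
      obtain ⟨c, rfl⟩ := hv
      exact ⟨a, b, c, by simp [Prod.ext_iff, zsmul_eq_mul]⟩
    · rintro ⟨a, b, c, rfl⟩
      refine ⟨a, b • ((0:ℂ),(1:ℂ)) + c • ((α, β) : ℂ × ℂ), ?_, ?_⟩
      · rw [mem_span_insert]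
        exact ⟨b, c • ((α, β) : ℂ × ℂ), mem_span_singleton.mpr ⟨c, rfl⟩, rfl⟩
      · simp [Prod.ext_iff, zsmul_eq_mul]
  -- the intersection as a ℤ-submodule
  set S : Submodule ℤ (ℂ × ℂ) :=
      L.restrictScalars ℤ ⊓ AddSubgroup.toIntSubmodule Γ with hSdef
  have hSmem : ∀ z : ℂ × ℂ, z ∈ S ↔ z ∈ L ∧ z ∈ Γ := fun z => Iff.rfl
  -- explicit elements of S
  have hz1S : ((x.num : ℂ), (x.den : ℂ)) ∈ S := by
    rw [hSmem]
    constructor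
    · exact (hLmem _).mpr ⟨(x.den : ℂ), by rw [Prod.mk.injEq]; exact ⟨by rw [mul_comm, hxd], rfl⟩⟩
    · exact (hΓmem _).mpr ⟨x.num, x.den, 0, by push_cast; simp⟩
  have hz2S : (((y.den : ℂ) * β) * (x : ℂ), (y.den : ℂ) * β) ∈ S := by
    rw [hSmem]
    constructor
    · exact (hLmem _).mpr ⟨(y.den : ℂ) * β, rfl⟩
    · refine (hΓmem _).mpr ⟨-y.num, 0, y.den, ?_⟩
      rw [Prod.mk.injEq]
      constructor
      · push_cast
        rw [hxy]
        linear_combination (y.den : ℂ) * hxy - hxy * (y.den:ℂ) - hyd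
      · push_cast; ring
  -- S is finitely generated
  have hPeq : AddSubgroup.toIntSubmodule Γ
      = span ℤ ({(1, 0), (0, 1), (α, β)} : Set (ℂ × ℂ)) := by
    rw [hΓ, ← span_int_eq_addSubgroupClosure]
    exact Submodule.toAddSubgroup_toIntSubmodule _
  have hPfg : (AddSubgroup.toIntSubmodule Γ).FG := by
    rw [hPeq]; exact Submodule.fg_span (Set.toFinite _)
  haveI : IsNoetherian ℤ ↥(AddSubgroup.toIntSubmodule Γ) :=
    isNoetherian_of_fg_of_noetherian _ hPfg
  have hle' : S ≤ AddSubgroup.toIntSubmodule Γ := inf_le_right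
  haveI : Module.Finite ℤ
      ↥(Submodule.comap (AddSubgroup.toIntSubmodule Γ).subtype S) :=
    Module.Finite.iff_fg.mpr (IsNoetherian.noetherian _)
  haveI : Module.Finite ℤ ↥S :=
    Module.Finite.equiv (Submodule.comapSubtypeEquivOfLe hle')
  haveI : Module.IsTorsionFree ℤ ↥S := inferInstance
  haveI : Module.Free ℤ ↥S := Module.free_of_finite_type_torsion_free'
  -- lower bound on rank
  set s1 : ↥S := ⟨_, hz1S⟩ with hs1
  set s2 : ↥S := ⟨_, hz2S⟩ with hs2
  have hxden : ((x.den : ℝ)) ≠ 0 := by exact_mod_cast x.den_nz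
  have hyden : ((y.den : ℝ)) ≠ 0 := by exact_mod_cast y.den_nz
  have hli : LinearIndependent ℤ ![s1, s2] := by
    rw [LinearIndependent.pair_iff]
    intro m n hmn
    have h2 : (m : ℂ) * (x.den : ℂ) + (n : ℂ) * ((y.den : ℂ) * β) = 0 := by
      have := congrArg (fun v : ↥S => (v : ℂ × ℂ).2) hmn
      simpa [hs1, hs2, zsmul_eq_mul] using this
    have him : (n : ℝ) * ((y.den : ℝ) * β.im) = 0 := by
      have := congrArg Complex.im h2
      simpa [Complex.add_im, Complex.mul_im] using this
    have hn : n = 0 := by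
      rcases mul_eq_zero.mp him with h | h
      · exact_mod_cast h
      · rcases mul_eq_zero.mp h with h' | h'
        · exact absurd h' hyden
        · exact absurd h' hβ
    subst hn
    have hm : (m : ℝ) * (x.den : ℝ) = 0 := by
      have := congrArg Complex.re h2
      simpa [Complex.add_re, Complex.mul_re] using this
    refine ⟨?_, rfl⟩
    rcases mul_eq_zero.mp hm with h | h
    · exact_mod_cast h
    · exact absurd h hxden
  have hge : 2 ≤ finrank ℤ ↥S := by
    simpa using hli.fintype_card_le_finrank
  -- upper bound on rank
  have hliC : LinearIndependent ℤ ![(1 : ℂ), β] := by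
    rw [LinearIndependent.pair_iff]
    intro m n hmn
    have hmn' : (m : ℂ) + (n : ℂ) * β = 0 := by
      simpa [zsmul_eq_mul] using hmn
    have him : (n : ℝ) * β.im = 0 := by
      have := congrArg Complex.im hmn'
      simpa [Complex.add_im, Complex.mul_im] using this
    have hn : n = 0 := by
      rcases mul_eq_zero.mp him with h | h
      · exact_mod_cast h
      · exact absurd h hβ
    subst hn
    have hm : (m : ℂ) = 0 := by simpa using hmn'
    exact ⟨by exact_mod_cast hm, rfl⟩
  let A : Submodule ℤ ℂ := span ℤ (Set.range ![(1 : ℂ), β])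
  let bA : Basis (Fin 2) ℤ ↥A := Basis.span hliC
  haveI : Module.Finite ℤ ↥A :=
    Module.Finite.iff_fg.mpr (Submodule.fg_span (Set.finite_range _))
  have hA2 : finrank ℤ ↥A = 2 := by
    rw [finrank_eq_card_basis bA, Fintype.card_fin]
  have hmemA : ∀ s : ↥S, ((s : ℂ × ℂ).2) ∈ A := by
    intro s
    obtain ⟨-, hsΓ⟩ := (hSmem _).mp s.2
    obtain ⟨a, b, c, hz⟩ := (hΓmem _).mp hsΓ
    rw [hz]
    have h1 : (1 : ℂ) ∈ Set.range ![(1 : ℂ), β] := ⟨0, rfl⟩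
    have h2 : β ∈ Set.range ![(1 : ℂ), β] := ⟨1, rfl⟩
    have h1' : (1 : ℂ) ∈ A := subset_span h1
    have h2' : β ∈ A := subset_span h2
    have := add_mem (zsmul_mem h1' b) (zsmul_mem h2' c)
    simpa [zsmul_eq_mul] using this
  let f : ↥S →ₗ[ℤ] ↥A :=
    { toFun := fun s => ⟨(s : ℂ × ℂ).2, hmemA s⟩
      map_add' := fun a b => rfl
      map_smul' := fun m a => rfl }
  have hf : Function.Injective f := by
    intro a b hab
    obtain ⟨ta, hta⟩ := (hLmem _).mp ((hSmem _).mp a.2).1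
    obtain ⟨tb, htb⟩ := (hLmem _).mp ((hSmem _).mp b.2).1
    have h2 : (a : ℂ × ℂ).2 = (b : ℂ × ℂ).2 := congrArg Subtype.val hab
    apply Subtype.ext
    rw [hta, htb]
    rw [hta, htb] at h2
    simp only at h2
    rw [h2]
  have hle2 : finrank ℤ ↥S ≤ 2 := by
    rw [← hA2]
    exact LinearMap.finrank_le_finrank_of_injective hf
  have hfr : finrank ℤ ↥S = 2 := le_antisymm hle2 hge
  let bS : Basis (Fin 2) ℤ ↥S := (Module.finBasis ℤ ↥S).reindex (finCongr hfr)
  have hmem2 : ∀ z : ℂ × ℂ, z ∈ S ↔ z ∈ L.toAddSubgroup ⊓ Γ := by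
    intro z
    rw [hSmem, AddSubgroup.mem_inf, Submodule.mem_toAddSubgroup]
  let e : ↥S ≃+ ↥(L.toAddSubgroup ⊓ Γ) :=
    { toFun := fun s => ⟨s.1, (hmem2 s.1).mp s.2⟩
      invFun := fun s => ⟨s.1, (hmem2 s.1).mpr s.2⟩
      left_inv := fun s => rfl
      right_inv := fun s => rfl
      map_add' := fun a b => rfl }
  exact ⟨bS.map e.toIntLinearEquiv⟩
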